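/- Under the decreasing clicking policy with block length s, initial clicking number T₀ and rate κ (with κ^{i−1} dividing T₀), for every block index i ≥ 1 the opinion at the start of block i satisfies x(i·s) = (1 − Υᵢ)·x₀ + Υᵢ·u₀, where Υᵢ = (1 − η) · Σ_{j=0}^{i−1} B^{(j+1)s − T₀/κ^{i−j−1}} · Z^{Σ_{q=0}^{j−1} T₀/κ^{i−1−q}} · (1 − β^{T₀/κ^{i−j−1}}). -/

import Mathlib

/-- Iterating an affine map `y ↦ c*y + (1-c)*e` for `t` steps. -/
lemma affine_iter (c e : ℝ) (f : ℕ → ℝ) (a : ℕ) :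
    ∀ t : ℕ, (∀ k, a ≤ k → k < a + t → f (k + 1) = c * f k + (1 - c) * e) →
      f (a + t) = c ^ t * f a + (1 - c ^ t) * e := by
  intro t
  induction t with
  | zero => intro _; simp
  | succ t ih =>
    intro h
    have h1 := h (a + t) (by omega) (by omega)
    have h2 := ih (fun k hk hk' => h k hk (by omega))
    have : a + (t + 1) = (a + t) + 1 := rfl
    rw [this, h1, h2, pow_succ]
    ring

/-- Under the decreasing clicking policy with block length `s`, initial clicking
number `T₀` and rate `κ` (block `j` clicks in its first `T₀ / κ^j` steps), for every block
index `i ≥ 1` with `κ^(i-1) ∣ T₀`, the opinion at the start of block `i` satisfies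
`x (i*s) = (1 - Υ) * x₀ + Υ * u₀` where
`Υ = (1 - η) * Σ_{j=0}^{i-1} B^((j+1)s - T₀/κ^(i-j-1)) * Z^(Σ_{q=0}^{j-1} T₀/κ^(i-1-q))
      * (1 - β^(T₀/κ^(i-j-1)))`. -/
theorem decreasing_policy_block_opinion
    (α β x₀ u₀ : ℝ) (hα : 0 < α) (hβ : 0 < β) (hαβ : α + β ≤ 1)
    (hx₀ : -1 ≤ x₀ ∧ x₀ ≤ 1) (hu₀ : -1 ≤ u₀ ∧ u₀ ≤ 1)
    (s T₀ κ : ℕ) (hs : 1 ≤ s) (hT₀ : T₀ ≤ s) (hκ : 2 ≤ κ)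
    (clk : ℕ → ℕ) (hclk : ∀ k, clk k = if k % s < T₀ / κ ^ (k / s) then 1 else 0)
    (x : ℕ → ℝ) (hx0 : x 0 = x₀)
    (hdyn : ∀ k, x (k + 1) =
      if clk k = 1 then α * x₀ + β * x k + (1 - α - β) * u₀
      else α / (α + β) * x₀ + β / (α + β) * x k)
    (i : ℕ) (hi : 1 ≤ i) (hdvd : κ ^ (i - 1) ∣ T₀) :
    x (i * s) =
      (1 - (1 - α / (1 - β)) * ∑ j ∈ Finset.range i,
          (β / (α + β)) ^ ((j + 1) * s - T₀ / κ ^ (i - j - 1)) *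
            (α + β) ^ (∑ q ∈ Finset.range j, T₀ / κ ^ (i - 1 - q)) *
            (1 - β ^ (T₀ / κ ^ (i - j - 1)))) * x₀ +
      ((1 - α / (1 - β)) * ∑ j ∈ Finset.range i,
          (β / (α + β)) ^ ((j + 1) * s - T₀ / κ ^ (i - j - 1)) *
            (α + β) ^ (∑ q ∈ Finset.range j, T₀ / κ ^ (i - 1 - q)) *
            (1 - β ^ (T₀ / κ ^ (i - j - 1)))) * u₀ := by
  have hZ : (0:ℝ) < α + β := by linarith
  have hZ0 : (α + β : ℝ) ≠ 0 := ne_of_gt hZ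
  have hβ1 : β < 1 := by linarith
  have hβ1' : (1:ℝ) - β ≠ 0 := by linarith
  set B : ℝ := β / (α + β) with hB
  set η : ℝ := α / (1 - β) with hη
  set T : ℕ → ℕ := fun j => T₀ / κ ^ j with hT
  have hTle : ∀ j, T j ≤ s := fun j => le_trans (Nat.div_le_self _ _) hT₀
  -- the closed-form sum
  set S : ℕ → ℝ := fun n => (1 - η) * ∑ j ∈ Finset.range n,
      B ^ ((j + 1) * s - T (n - j - 1)) *
        (α + β) ^ (∑ q ∈ Finset.range j, T (n - 1 - q)) *
        (1 - β ^ (T (n - j - 1))) with hS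
  -- key product identity: B^(s-T) * β^T = B^s * Z^T
  have hBZ : ∀ n : ℕ, B ^ (s - T n) * β ^ (T n) = B ^ s * (α + β) ^ (T n) := by
    intro n
    have hBβ : B * (α + β) = β := by rw [hB]; field_simp
    calc B ^ (s - T n) * β ^ (T n)
        = B ^ (s - T n) * (B * (α + β)) ^ (T n) := by rw [hBβ]
      _ = B ^ (s - T n) * B ^ (T n) * (α + β) ^ (T n) := by rw [mul_pow]; ring
      _ = B ^ s * (α + β) ^ (T n) := by rw [← pow_add, Nat.sub_add_cancel (hTle n)]
  -- recursion for S
  have Srec : ∀ n : ℕ, S (n + 1) =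
      B ^ (s - T n) * β ^ (T n) * S n + (1 - η) * B ^ (s - T n) * (1 - β ^ (T n)) := by
    intro n
    rw [hBZ n]
    simp only [hS]
    rw [Finset.sum_range_succ']
    have hterm0 : B ^ ((0 + 1) * s - T (n + 1 - 0 - 1)) *
        (α + β) ^ (∑ q ∈ Finset.range 0, T (n + 1 - 1 - q)) *
        (1 - β ^ (T (n + 1 - 0 - 1))) = B ^ (s - T n) * (1 - β ^ (T n)) := by
      simp
    have hshift : ∀ j ∈ Finset.range n,
        B ^ ((j + 1 + 1) * s - T (n + 1 - (j + 1) - 1)) *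
          (α + β) ^ (∑ q ∈ Finset.range (j + 1), T (n + 1 - 1 - q)) *
          (1 - β ^ (T (n + 1 - (j + 1) - 1))) =
        (B ^ s * (α + β) ^ (T n)) *
          (B ^ ((j + 1) * s - T (n - j - 1)) *
            (α + β) ^ (∑ q ∈ Finset.range j, T (n - 1 - q)) *
            (1 - β ^ (T (n - j - 1)))) := by
      intro j hj
      have hj' : j < n := Finset.mem_range.mp hj
      have e1 : n + 1 - (j + 1) - 1 = n - j - 1 := by omega
      have e2 : (j + 1 + 1) * s - T (n - j - 1) = s + ((j + 1) * s - T (n - j - 1)) := by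
        have ht : T (n - j - 1) ≤ (j + 1) * s :=
          le_trans (hTle _) (Nat.le_mul_of_pos_left s (by omega))
        have h12 : (j + 1 + 1) * s = s + (j + 1) * s := by ring
        rw [h12, Nat.add_sub_assoc ht]
      have e3 : ∑ q ∈ Finset.range (j + 1), T (n + 1 - 1 - q) =
          T n + ∑ q ∈ Finset.range j, T (n - 1 - q) := by
        rw [Finset.sum_range_succ']
        have : ∀ q ∈ Finset.range j, T (n + 1 - 1 - (q + 1)) = T (n - 1 - q) := by
          intro q _; congr 1; omega
        rw [Finset.sum_congr rfl this]
        simp [add_comm]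
      rw [e1, e2, e3, pow_add, pow_add]
      ring
    rw [Finset.sum_congr rfl hshift, hterm0, ← Finset.mul_sum]
    ring
  -- per-block evolution
  have block : ∀ j : ℕ, x ((j + 1) * s) =
      B ^ (s - T j) * β ^ (T j) * x (j * s) +
        B ^ (s - T j) * (1 - β ^ (T j)) * (η * x₀ + (1 - η) * u₀) +
        (1 - B ^ (s - T j)) * x₀ := by
    intro j
    -- phase 1: clicking steps
    have phase1 : x (j * s + T j) = β ^ (T j) * x (j * s) +
        (1 - β ^ (T j)) * (η * x₀ + (1 - η) * u₀) := by
      apply affine_iter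
      intro k hk hk'
      obtain ⟨r, hr, rfl⟩ : ∃ r, r < T j ∧ k = j * s + r := ⟨k - j * s, by omega, by omega⟩
      have hrs : r < s := lt_of_lt_of_le hr (hTle j)
      have hmod : (j * s + r) % s = r := by
        rw [Nat.add_comm, Nat.add_mul_mod_self_right, Nat.mod_eq_of_lt hrs]
      have hdiv : (j * s + r) / s = j := by
        rw [Nat.add_comm, Nat.add_mul_div_right _ _ (by omega : 0 < s),
          Nat.div_eq_of_lt hrs, Nat.zero_add]
      have hc : clk (j * s + r) = 1 := by
        rw [hclk, hmod, hdiv, if_pos hr]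
      rw [hdyn, if_pos hc]
      have h1 : (1 - β) * η = α := by rw [hη]; field_simp
      have h2 : (1 - β) * (1 - η) = 1 - β - α := by
        have : (1 - β) * (1 - η) = (1 - β) - (1 - β) * η := by ring
        rw [this, h1]
      nlinarith [h1, h2]
    -- phase 2: non-clicking steps
    have phase2 : x (j * s + T j + (s - T j)) = B ^ (s - T j) * x (j * s + T j) +
        (1 - B ^ (s - T j)) * x₀ := by
      apply affine_iter
      intro k hk hk'
      obtain ⟨r, hr1, hr2, rfl⟩ : ∃ r, T j ≤ r ∧ r < s ∧ k = j * s + r :=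
        ⟨k - j * s, by omega, by omega, by omega⟩
      have hmod : (j * s + r) % s = r := by
        rw [Nat.add_comm, Nat.add_mul_mod_self_right, Nat.mod_eq_of_lt hr2]
      have hdiv : (j * s + r) / s = j := by
        rw [Nat.add_comm, Nat.add_mul_div_right _ _ (by omega : 0 < s),
          Nat.div_eq_of_lt hr2, Nat.zero_add]
      have hTj : T j = T₀ / κ ^ j := rfl
      have hc : clk (j * s + r) = 0 := by
        rw [hclk, hmod, hdiv]
        exact if_neg (by omega)
      rw [hdyn, if_neg (by omega)]
      have : α / (α + β) = 1 - B := by rw [hB]; field_simp; ring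
      rw [this]; ring
    have harith : j * s + T j + (s - T j) = (j + 1) * s := by
      have := hTle j; cases Nat.le.dest this with
      | intro c hc => ring_nf; omega
    rw [← harith, phase2, phase1]
    ring
  -- main induction
  have key : ∀ n : ℕ, x (n * s) = (1 - S n) * x₀ + S n * u₀ := by
    intro n
    induction n with
    | zero => simp [hS, hx0]
    | succ n ih =>
      rw [block n, ih, Srec n]
      ring
  have := key i
  simp only [hS, hT] at this
  exact this
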